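/- Let x₁ = (3/4)(1,1,1), x₂ = (3/4)(1,−1,−1), x₃ = (3/4)(−1,1,−1), x₄ = (3/4)(−1,−1,1) in ℝ³ and r = 1/2, and define the inversion maps g_j(x) = x_j + r²(x − x_j)/|x − x_j|² for x ≠ x_j. Then the four closed balls B̄(x_j, r) are pairwise disjoint (the distance between any two centers equals 3√2/2, so any two balls are separated by 3√2/2 − 1 > 0), and for all i ≠ j in {1,2,3,4}, g_j maps the closed ball B̄(x_i, r) into the open ball B(x_j, r). -/

import Mathlib

open Metric

/-- Centers of the four Schottky spheres: the vertices of a regular tetrahedron scaled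
by `3/4`. -/
noncomputable def schottky3DCenter : Fin 4 → EuclideanSpace ℝ (Fin 3) :=
  ![(3/4 : ℝ) • (WithLp.toLp 2 (![1, 1, 1] : Fin 3 → ℝ) : EuclideanSpace ℝ (Fin 3)),
    (3/4 : ℝ) • (WithLp.toLp 2 (![1, -1, -1] : Fin 3 → ℝ) : EuclideanSpace ℝ (Fin 3)),
    (3/4 : ℝ) • (WithLp.toLp 2 (![-1, 1, -1] : Fin 3 → ℝ) : EuclideanSpace ℝ (Fin 3)),
    (3/4 : ℝ) • (WithLp.toLp 2 (![-1, -1, 1] : Fin 3 → ℝ) : EuclideanSpace ℝ (Fin 3))]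

/-- The inversion map `g_j(x) = x_j + r²(x − x_j)/|x − x_j|²` with `r = 1/2`. -/
noncomputable def schottky3DMap (j : Fin 4) (x : EuclideanSpace ℝ (Fin 3)) :
    EuclideanSpace ℝ (Fin 3) :=
  schottky3DCenter j +
    (((1/2 : ℝ) ^ 2) / ‖x - schottky3DCenter j‖ ^ 2) • (x - schottky3DCenter j)

lemma schottky3D_dist : ∀ i j : Fin 4, i ≠ j →
      dist (schottky3DCenter i) (schottky3DCenter j) = 3 * Real.sqrt 2 / 2 := by
  have key : Real.sqrt (9/2) = 3 * Real.sqrt 2 / 2 := by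
    rw [show (9/2 : ℝ) = (3*Real.sqrt 2/2)^2 by
      have : Real.sqrt 2 ^ 2 = 2 := Real.sq_sqrt (by norm_num)
      nlinarith]
    exact Real.sqrt_sq (by positivity)
  intro i j hij
  fin_cases i <;> fin_cases j <;> first
    | exact absurd rfl hij
    | (rw [EuclideanSpace.dist_eq, ← key]
       exact congrArg Real.sqrt (by
        simp [schottky3DCenter, Fin.sum_univ_three, Real.dist_eq]
        norm_num))

lemma sqrt2_gt : (1.4 : ℝ) < Real.sqrt 2 := by
  have h2 : Real.sqrt 2 ^ 2 = 2 := Real.sq_sqrt (by norm_num)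
  nlinarith [Real.sqrt_nonneg 2]

/-- The distance between any two of the four centers equals `3√2/2`, the separation
`3√2/2 − 1` is positive, the four closed balls `B̄(x_j, 1/2)` are pairwise disjoint, and
for `i ≠ j` the inversion `g_j` maps `B̄(x_i, 1/2)` into the open ball `B(x_j, 1/2)`. -/
theorem schottky3D_disjoint_and_mapsTo :
    (∀ i j : Fin 4, i ≠ j →
      dist (schottky3DCenter i) (schottky3DCenter j) = 3 * Real.sqrt 2 / 2) ∧
    0 < 3 * Real.sqrt 2 / 2 - 1 ∧
    (∀ i j : Fin 4, i ≠ j →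
      Disjoint (closedBall (schottky3DCenter i) (1/2))
        (closedBall (schottky3DCenter j) (1/2))) ∧
    (∀ i j : Fin 4, i ≠ j →
      Set.MapsTo (schottky3DMap j) (closedBall (schottky3DCenter i) (1/2))
        (ball (schottky3DCenter j) (1/2))) := by
  have hs := sqrt2_gt
  refine ⟨schottky3D_dist, by nlinarith, ?_, ?_⟩
  · intro i j hij
    apply closedBall_disjoint_closedBall
    rw [schottky3D_dist i j hij]
    nlinarith
  · intro i j hij x hx
    have hdc := schottky3D_dist i j hij
    have hx' : dist x (schottky3DCenter i) ≤ 1/2 := mem_closedBall.mp hx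
    have hd : (1 : ℝ) < dist x (schottky3DCenter j) := by
      have := dist_triangle (schottky3DCenter i) x (schottky3DCenter j)
      rw [dist_comm (schottky3DCenter i) x] at this
      nlinarith
    have hd0 : (0 : ℝ) < ‖x - schottky3DCenter j‖ := by
      rw [← dist_eq_norm]; linarith
    rw [mem_ball, schottky3DMap]
    have : dist (schottky3DCenter j +
        (((1/2 : ℝ) ^ 2) / ‖x - schottky3DCenter j‖ ^ 2) • (x - schottky3DCenter j))
        (schottky3DCenter j)
        = ((1/2 : ℝ) ^ 2) / ‖x - schottky3DCenter j‖ := by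
      rw [dist_eq_norm, add_sub_cancel_left, norm_smul]
      rw [Real.norm_eq_abs, abs_of_nonneg (by positivity)]
      field_simp
    rw [this]
    rw [div_lt_iff₀ hd0, ← dist_eq_norm]
    nlinarith
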